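/- For positive integers α, β and all n ≥ 1: Σ_{k=0}^{n} E_{n,k}(α,β,q) = ∏_{i=0}^{n-1} [α+β+i], where E_{n,k} is defined by E_{0,0}=1, E_{n,k} = q^(β+k-1)[n-k+α]E_{n-1,k-1} + [k+β]E_{n-1,k}, and E_{n,k}=0 outside 0 ≤ k ≤ n. -/

import Mathlib

open Finset

noncomputable section

abbrev K : Type := RatFunc ℚ

def qq : K := RatFunc.X

def qint (m : ℕ) : K := ∑ i ∈ Finset.range m, qq ^ i

def qfact (m : ℕ) : K := ∏ i ∈ Finset.range m, qint (i + 1)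

def qbinom (a b : ℕ) : K := qfact a / (qfact b * qfact (a - b))

def E (α β : ℕ) : ℕ → ℕ → K
  | 0, k => if k = 0 then 1 else 0
  | n + 1, 0 => qint β * E α β n 0
  | n + 1, k + 1 =>
      qq ^ (β + k) * qint (n - k + α) * E α β n k + qint (k + 1 + β) * E α β n (k + 1)

def poch (N : ℕ) : PowerSeries K :=
  ∏ i ∈ Finset.range N, (1 - PowerSeries.C (qq ^ i) * PowerSeries.X)

lemma qint_add (a b : ℕ) : qint (a + b) = qint a + qq ^ a * qint b := by
  simp only [qint, Finset.sum_range_add, Finset.mul_sum, pow_add]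

lemma E_zero_of_lt (α β : ℕ) : ∀ n k, n < k → E α β n k = 0 := by
  intro n
  induction n with
  | zero => intro k hk; simp [E]; omega
  | succ n ih =>
    intro k hk
    match k, hk with
    | k + 1, hk =>
      simp only [E, ih k (by omega), ih (k+1) (by omega), mul_zero, add_zero]

theorem E_row_sum (α β : ℕ) (hα : 1 ≤ α) (hβ : 1 ≤ β) (n : ℕ) (hn : 1 ≤ n) :
    ∑ k ∈ Finset.range (n + 1), E α β n k = ∏ i ∈ Finset.range n, qint (α + β + i) := by
  clear hn
  induction n with
  | zero => simp [E]
  | succ n ih =>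
    rw [Finset.prod_range_succ, ← ih, Finset.sum_range_succ']
    have hz : E α β n (n + 1) = 0 := E_zero_of_lt α β n (n + 1) (by omega)
    simp only [E]
    rw [Finset.sum_add_distrib, add_assoc]
    have h1 : (∑ i ∈ Finset.range (n + 1), qint (i + 1 + β) * E α β n (i + 1)) +
        qint β * E α β n 0 = ∑ k ∈ Finset.range (n + 1), qint (k + β) * E α β n k := by
      rw [Finset.sum_range_succ, hz, mul_zero, add_zero,
        Finset.sum_range_succ' (fun k => qint (k + β) * E α β n k) n]
      simp
    rw [h1, Finset.sum_mul, ← Finset.sum_add_distrib]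
    apply Finset.sum_congr rfl
    intro k hk
    simp only [Finset.mem_range] at hk
    have h2 : α + β + n = (k + β) + (n - k + α) := by omega
    have h3 := qint_add (k + β) (n - k + α)
    rw [h2, h3, show β + k = k + β from add_comm β k]
    ring

end
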